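/- There exists a countable example space X and an uncountably infinite hypothesis class H ⊆ {0,1}^X that satisfies the UUS property and is uniformly generatable. Concretely, taking X = ℤ and H = {x ↦ 1[x ∈ A or x ≤ 0] : A ⊆ ℕ}, H is uncountable, satisfies UUS, and has Closure dimension 0 (so it is uniformly generatable). -/
import Mathlib


open Set

variable {X : Type*}

/-- The set of distinct examples seen in the first `t` steps of the stream `x`. -/
def seenSet (x : ℕ → X) (t : ℕ) : Set X := x '' {i | i < t}

/-- The finite prefix `x₁, ..., x_t` of the stream, as a list. -/
def prefList (x : ℕ → X) (t : ℕ) : List X := List.ofFn (fun i : Fin t => x i)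

/-- The version space of `H` induced by the positive examples `S`. -/
def versionSpace (H : Set (Set X)) (S : Set X) : Set (Set X) := {h | h ∈ H ∧ S ⊆ h}

/-- The closure `⟨S⟩_H`: common positive examples of all consistent hypotheses. -/
def hclosure (H : Set (Set X)) (S : Set X) : Set X := ⋂₀ versionSpace H S

/-- There exist `d` distinct examples with nonempty version space and finite closure. -/
def FinClosureWitness (H : Set (Set X)) (d : ℕ) : Prop :=
  ∃ S : Finset X, S.card = d ∧ (versionSpace H ↑S).Nonempty ∧ (hclosure H ↑S).Finite

/-- The Closure dimension of `H` is infinite. -/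
def ClosureDimInf (H : Set (Set X)) : Prop := ∀ n : ℕ, ∃ d, n ≤ d ∧ FinClosureWitness H d

/-- The Closure dimension of `H` is at most `d`. -/
def ClosureDimLE (H : Set (Set X)) (d : ℕ) : Prop := ∀ d', d < d' → ¬ FinClosureWitness H d'

/-- Uniformly Unbounded Support property. -/
def UUS (H : Set (Set X)) : Prop := ∀ h ∈ H, h.Infinite

/-- The generator `G` outputs an unseen positive example of `h` at step `s`. -/
def GenOK (G : List X → X) (h : Set X) (x : ℕ → X) (s : ℕ) : Prop :=
  G (prefList x s) ∈ h \ seenSet x s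

def UniformlyGeneratable (H : Set (Set X)) : Prop :=
  ∃ G : List X → X, ∃ d : ℕ, ∀ h ∈ H, ∀ x : ℕ → X, (∀ i, x i ∈ h) →
    ∀ t, (seenSet x t).ncard = d → ∀ s, t ≤ s → GenOK G h x s

def NonUniformlyGeneratable (H : Set (Set X)) : Prop :=
  ∃ G : List X → X, ∀ h ∈ H, ∃ d : ℕ, ∀ x : ℕ → X, (∀ i, x i ∈ h) →
    ∀ t, (seenSet x t).ncard = d → ∀ s, t ≤ s → GenOK G h x s

/-- `x` is an enumeration of the support `h`. -/
def IsEnum (h : Set X) (x : ℕ → X) : Prop := (∀ i, x i ∈ h) ∧ ∀ y ∈ h, ∃ i, x i = y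

def GeneratableInLimit (H : Set (Set X)) : Prop :=
  ∃ G : List X → X, ∀ h ∈ H, ∀ x : ℕ → X, IsEnum h x →
    ∃ t, ∀ s, t ≤ s → GenOK G h x s

/-- The class `{x ↦ 1[x ∈ A or x ≤ 0] : A ⊆ ℕ}` over `ℤ`. -/
def Hup : Set (Set ℤ) :=
  {h | ∃ A : Set ℤ, (∀ a ∈ A, 0 < a) ∧ h = A ∪ {x : ℤ | x ≤ 0}}

/-- an uncountable, UUS, uniformly generatable class (Closure dimension 0). -/
lemma foldr_min_le (l : List ℤ) : ∀ a ∈ l, l.foldr min 0 ≤ a := by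
  induction l with
  | nil => simp
  | cons b l ih =>
    intro a ha
    rcases List.mem_cons.mp ha with h | h
    · subst h; exact min_le_left _ _
    · exact le_trans (min_le_right _ _) (ih a h)

lemma foldr_min_nonpos (l : List ℤ) : l.foldr min 0 ≤ 0 := by
  induction l with
  | nil => simp
  | cons b l ih => exact le_trans (min_le_right _ _) ih

theorem stmt3 :
    ¬ Hup.Countable ∧ UUS Hup ∧ ClosureDimLE Hup 0 ∧ UniformlyGeneratable Hup := by
  have hnonpos : ∀ h ∈ Hup, {x : ℤ | x ≤ 0} ⊆ h := by
    rintro h ⟨A, hA, rfl⟩ x hx; exact Or.inr hx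
  refine ⟨?_, ?_, ?_, ?_⟩
  · -- uncountable
    intro hc
    set f : Set ℕ → Set ℤ := fun A => ((fun n : ℕ => (n : ℤ) + 1) '' A) ∪ {x : ℤ | x ≤ 0}
      with hf
    have hfinj : Function.Injective f := by
      intro A B hAB
      ext n
      have key : ∀ C : Set ℕ, n ∈ C ↔ ((n : ℤ) + 1) ∈ f C := by
        intro C
        constructor
        · intro h; exact Or.inl ⟨n, h, rfl⟩
        · rintro (⟨m, hm, hmn⟩ | h)
          · have h' : (m : ℤ) + 1 = (n : ℤ) + 1 := hmn
            have : m = n := by exact_mod_cast (by linarith : (m : ℤ) = n)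
            rwa [← this]
          · simp only [mem_setOf_eq] at h; omega
      rw [key A, key B, hAB]
    have hrange : range f ⊆ Hup := by
      rintro _ ⟨A, rfl⟩
      exact ⟨_, by rintro a ⟨m, _, rfl⟩; positivity, rfl⟩
    have h1 : (range f).Countable := hc.mono hrange
    have h2 : (f ⁻¹' range f).Countable := h1.preimage hfinj
    have h3 : (univ : Set (Set ℕ)).Countable := by
      have : f ⁻¹' range f = univ := by ext A; simp [mem_range_self]
      rwa [this] at h2
    have : Countable (Set ℕ) := countable_univ_iff.mp h3
    obtain ⟨g, hg⟩ := exists_injective_nat (Set ℕ)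
    exact Function.cantor_injective g hg
  · -- UUS
    intro h hh
    have : {x : ℤ | x ≤ 0}.Infinite := by
      have : Function.Injective (fun n : ℕ => -(n : ℤ)) := by
        intro a b hab; simpa using hab
      apply Set.infinite_of_injective_forall_mem this
      intro n; simp
    exact this.mono (hnonpos h hh)
  · -- Closure dim ≤ 0
    intro d' _ ⟨S, _, ⟨h0, hh0⟩, hfin⟩
    have : {x : ℤ | x ≤ 0} ⊆ hclosure Hup ↑S := by
      intro x hx g hg
      exact hnonpos g hg.1 hx
    have : {x : ℤ | x ≤ 0}.Infinite := by
      have : Function.Injective (fun n : ℕ => -(n : ℤ)) := by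
        intro a b hab; simpa using hab
      apply Set.infinite_of_injective_forall_mem this
      intro n; simp
    exact this (hfin.subset ‹{x : ℤ | x ≤ 0} ⊆ hclosure Hup ↑S›)
  · -- uniformly generatable
    refine ⟨fun l => l.foldr min 0 - 1, 0, ?_⟩
    intro h hh x _ t _ s _
    constructor
    · apply hnonpos h hh
      have := foldr_min_nonpos (prefList x s)
      show List.foldr min 0 (prefList x s) - 1 ≤ 0
      omega
    · rintro ⟨i, hi, hxi⟩
      have hmem : x i ∈ prefList x s := by
        simp only [prefList, List.mem_ofFn]
        exact ⟨⟨i, hi⟩, rfl⟩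
      have := foldr_min_le (prefList x s) (x i) hmem
      have hxi' : x i = List.foldr min 0 (prefList x s) - 1 := hxi
      omega
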